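/- Fix r ≥ 3 and R > 0. For any s > s₀ > d/2 there exists a constant C_{r,s} > 0 such that for every P ∈ 𝒫_r and every u ∈ ℓ²_s with ‖u‖_s < R one has ‖X_P(u)‖_s ≤ C_{r,s} · ‖P‖_R / R. -/

import Mathlib

open scoped BigOperators
open scoped ENNReal
open MeasureTheory

namespace AG

abbrev Zd (d : ℕ) := Fin d → ℤ

noncomputable def enorm {d : ℕ} (j : Zd d) : ℝ := Real.sqrt (∑ i, ((j i : ℝ))^2)

abbrev Idx (d : ℕ) := Zd d × Bool

noncomputable def inorm {d : ℕ} (J : Idx d) : ℝ := enorm J.1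

def sgn (b : Bool) : ℤ := if b then 1 else -1

noncomputable def sgnC (b : Bool) : ℂ := if b then 1 else -1

def conjIdx {d : ℕ} (J : Idx d) : Idx d := (J.1, !J.2)

abbrev Seq (d : ℕ) := Idx d → ℂ

noncomputable def sobNormSq (d : ℕ) (s : ℝ) (u : Seq d) : ℝ :=
  ∑' J : Idx d, (1 + inorm J) ^ (2 * s) * ‖u J‖ ^ 2

noncomputable def sobNorm (d : ℕ) (s : ℝ) (u : Seq d) : ℝ := Real.sqrt (sobNormSq d s u)

def MemSob (d : ℕ) (s : ℝ) (u : Seq d) : Prop :=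
  Summable (fun J : Idx d => (1 + inorm J) ^ (2 * s) * ‖u J‖ ^ 2)

noncomputable def momentum {d r : ℕ} (Jv : Fin r → Idx d) : Zd d :=
  ∑ l, sgn ((Jv l).2) • ((Jv l).1)

structure Poly (d r : ℕ) where
  coeff : (Fin r → Idx d) → ℂ
  symm : ∀ (π : Equiv.Perm (Fin r)) (Jv : Fin r → Idx d), coeff (Jv ∘ π) = coeff Jv
  mom : ∀ Jv, coeff Jv ≠ 0 → momentum Jv = 0
  reality : ∀ Jv, (starRingEnd ℂ) (coeff (fun l => conjIdx (Jv l))) = coeff Jv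
  bdd : ∃ M : ℝ, ∀ Jv, ‖coeff Jv‖ ≤ M

noncomputable def Poly.norm {d r : ℕ} (P : Poly d r) (R : ℝ) : ℝ :=
  (⨆ Jv : Fin r → Idx d, ‖P.coeff Jv‖) * R ^ r

noncomputable def Poly.eval {d r : ℕ} (P : Poly d r) (u : Seq d) : ℂ :=
  ∑' Jv : Fin r → Idx d, P.coeff Jv * ∏ l, u (Jv l)

noncomputable def Poly.pderiv {d r : ℕ} (P : Poly d r) (K : Idx d) (u : Seq d) : ℂ :=
  ∑' Jv : Fin r → Idx d, ∑ l : Fin r,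
    (if Jv l = K then P.coeff Jv * ∏ m ∈ Finset.univ.erase l, u (Jv m) else 0)

noncomputable def Poly.field {d r : ℕ} (P : Poly d r) (u : Seq d) : Seq d :=
  fun J => Complex.I * sgnC J.2 * P.pderiv (conjIdx J) u

noncomputable def freqSum {d r : ℕ} (ω : Zd d → ℝ) (Jv : Fin r → Idx d) : ℝ :=
  ∑ l, (sgn ((Jv l).2) : ℝ) * ω ((Jv l).1)





/-- Cauchy–Schwarz for ENNReal tsums. -/
lemma tsum_mul_le_sq {ι : Type*} [Countable ι] (f g : ι → ℝ≥0∞) :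
    (∑' i, f i * g i) ^ 2 ≤ (∑' i, (f i) ^ 2) * (∑' i, (g i) ^ 2) := by
  letI : MeasurableSpace ι := ⊤
  haveI : MeasurableSingletonClass ι := ⟨fun _ => trivial⟩
  have hmeas : ∀ h : ι → ℝ≥0∞, Measurable h := fun h s _ => trivial
  have H := ENNReal.lintegral_mul_le_Lp_mul_Lq (Measure.count (α := ι))
    Real.HolderConjugate.two_two (hmeas f).aemeasurable (hmeas g).aemeasurable
  rw [lintegral_count, lintegral_count, lintegral_count] at H
  have H2 : (∑' i, f i * g i) ≤
      (∑' i, (f i) ^ 2) ^ (1/2 : ℝ) * (∑' i, (g i) ^ 2) ^ (1/2 : ℝ) := by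
    calc (∑' i, f i * g i) ≤ (∑' i, f i ^ (2:ℝ)) ^ (1/2:ℝ) * (∑' i, g i ^ (2:ℝ)) ^ (1/2:ℝ) := H
    _ = (∑' i, (f i) ^ 2) ^ (1/2 : ℝ) * (∑' i, (g i) ^ 2) ^ (1/2 : ℝ) := by
        congr 1 <;> congr 1 <;> exact tsum_congr fun i => by
          rw [show ((2:ℝ) = ((2:ℕ):ℝ)) by norm_num, ENNReal.rpow_natCast]
  calc (∑' i, f i * g i) ^ 2
      ≤ ((∑' i, (f i) ^ 2) ^ (1/2 : ℝ) * (∑' i, (g i) ^ 2) ^ (1/2 : ℝ)) ^ 2 :=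
        pow_le_pow_left' H2 2
    _ = (∑' i, (f i) ^ 2) * (∑' i, (g i) ^ 2) := by
        rw [mul_pow]
        congr 1 <;>
        · rw [← ENNReal.rpow_natCast (_ ^ (1/2:ℝ)) 2, ← ENNReal.rpow_mul]
          norm_num

/-- crude Cauchy–Schwarz for finite sums. -/
lemma sq_sum_le {ι : Type*} (F : Finset ι) (x : ι → ℝ≥0∞) :
    (∑ i ∈ F, x i) ^ 2 ≤ (2 * F.card) * ∑ i ∈ F, (x i) ^ 2 := by
  have key : ∀ a b : ℝ≥0∞, a * b ≤ a ^ 2 + b ^ 2 := by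
    intro a b
    rcases le_total a b with h | h
    · calc a * b ≤ b * b := mul_le_mul_left h b
        _ = b ^ 2 := (sq b).symm
        _ ≤ a ^ 2 + b ^ 2 := le_add_self
    · calc a * b ≤ a * a := mul_le_mul_right h a
        _ = a ^ 2 := (sq a).symm
        _ ≤ a ^ 2 + b ^ 2 := le_self_add
  calc (∑ i ∈ F, x i) ^ 2 = ∑ i ∈ F, ∑ j ∈ F, x i * x j := by
        rw [sq, Finset.sum_mul_sum]
    _ ≤ ∑ i ∈ F, ∑ j ∈ F, ((x i) ^ 2 + (x j) ^ 2) :=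
        Finset.sum_le_sum fun i _ => Finset.sum_le_sum fun j _ => key _ _
    _ = (2 * F.card) * ∑ i ∈ F, (x i) ^ 2 := by
        have : ∀ i : ι, ∑ j ∈ F, ((x i) ^ 2 + (x j) ^ 2)
            = F.card * (x i)^2 + ∑ j ∈ F, (x j)^2 := by
          intro i
          rw [Finset.sum_add_distrib, Finset.sum_const, nsmul_eq_mul]
        rw [Finset.sum_congr rfl (fun i _ => this i), Finset.sum_add_distrib,
          Finset.sum_const, nsmul_eq_mul, ← Finset.mul_sum]
        ring

/-- tsum over a pi type of a product equals the power of the tsum. -/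
lemma tsum_pi_prod_fin {κ : Type*} (g : κ → ℝ≥0∞) :
    ∀ n : ℕ, ∑' f : Fin n → κ, ∏ i, g (f i) = (∑' k, g k) ^ n := by
  intro n
  induction n with
  | zero =>
    simp only [Finset.univ_eq_empty, Finset.prod_empty, pow_zero]
    exact tsum_eq_single (default : Fin 0 → κ) (fun f hf => absurd (Subsingleton.elim f default) hf) |>.trans rfl
  | succ n ih =>
    rw [← (Fin.consEquiv (fun _ : Fin (n+1) => κ)).tsum_eq]
    have : ∀ p : κ × (Fin n → κ),
        ∏ i, g (((Fin.consEquiv (fun _ : Fin (n+1) => κ)) p) i) = g p.1 * ∏ i, g (p.2 i) := by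
      intro p
      rw [Fin.prod_univ_succ]
      simp
    calc ∑' p : κ × (Fin n → κ), ∏ i, g (((Fin.consEquiv (fun _ : Fin (n+1) => κ)) p) i)
        = ∑' p : κ × (Fin n → κ), g p.1 * ∏ i, g (p.2 i) := tsum_congr this
      _ = ∑' k, ∑' f : Fin n → κ, g k * ∏ i, g (f i) := ENNReal.tsum_prod'
      _ = ∑' k, g k * ∑' f : Fin n → κ, ∏ i, g (f i) := by
          exact tsum_congr fun k => ENNReal.tsum_mul_left
      _ = (∑' k, g k) * (∑' k, g k) ^ n := by rw [ih, ENNReal.tsum_mul_right]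
      _ = (∑' k, g k) ^ (n + 1) := by ring

lemma tsum_pi_prod {ι κ : Type*} [Fintype ι] (g : κ → ℝ≥0∞) :
    ∑' f : ι → κ, ∏ i, g (f i) = (∑' k, g k) ^ (Fintype.card ι) := by
  classical
  obtain ⟨e⟩ : Nonempty (ι ≃ Fin (Fintype.card ι)) := ⟨Fintype.equivFin ι⟩
  rw [← (Equiv.arrowCongr e (Equiv.refl κ)).symm.tsum_eq]
  have : ∀ f : Fin (Fintype.card ι) → κ,
      ∏ i : ι, g (((Equiv.arrowCongr e (Equiv.refl κ)).symm f) i) = ∏ j, g (f j) := by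
    intro f
    rw [← Equiv.prod_comp e (fun j => g (f j))]
    exact Finset.prod_congr rfl fun i _ => by simp [Equiv.arrowCongr]
  rw [tsum_congr this, tsum_pi_prod_fin]

/-- enorm-style bound for tsum of complex numbers in ℝ≥0∞. -/
lemma ofReal_abs_tsum_le {ι : Type*} [Countable ι] (f : ι → ℂ) :
    ENNReal.ofReal (‖∑' i, f i‖) ≤ ∑' i, ENNReal.ofReal (‖f i‖) := by
  have habs : ∀ z : ℂ, ENNReal.ofReal (‖z‖) = (‖z‖₊ : ℝ≥0∞) := by
    intro z
    rw [ENNReal.ofReal]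
    congr 1
    simp [Real.toNNReal, nnnorm, norm_nonneg]
  simp only [habs]
  by_cases h : Summable fun i => ‖f i‖₊
  · rw [← ENNReal.coe_tsum h]
    exact_mod_cast nnnorm_tsum_le h
  · have : ∑' i, (‖f i‖₊ : ℝ≥0∞) = ⊤ := by
      by_contra hne
      exact h (ENNReal.tsum_coe_ne_top_iff_summable.mp hne)
    rw [this]; exact le_top



noncomputable def toEuc {d : ℕ} (j : Zd d) : EuclideanSpace ℝ (Fin d) := WithLp.toLp 2 (fun i => (j i : ℝ))

lemma enorm_eq_norm {d : ℕ} (j : Zd d) : enorm j = ‖toEuc j‖ := by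
  rw [EuclideanSpace.norm_eq]
  unfold enorm
  congr 1
  exact Finset.sum_congr rfl fun i _ => by
    rw [Real.norm_eq_abs, sq_abs]; rfl

lemma enorm_nonneg {d : ℕ} (j : Zd d) : 0 ≤ enorm j := Real.sqrt_nonneg _

lemma inorm_nonneg {d : ℕ} (J : Idx d) : 0 ≤ inorm J := enorm_nonneg _

lemma toEuc_sum {d : ℕ} {ι : Type*} (F : Finset ι) (f : ι → Zd d) :
    toEuc (∑ i ∈ F, f i) = ∑ i ∈ F, toEuc (f i) := by
  ext k
  show ((∑ i ∈ F, f i) k : ℝ) = (∑ i ∈ F, toEuc (f i)) k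
  rw [Finset.sum_apply, WithLp.ofLp_sum, Finset.sum_apply]
  push_cast
  rfl

lemma enorm_sum_le {d : ℕ} {ι : Type*} (F : Finset ι) (f : ι → Zd d) :
    enorm (∑ i ∈ F, f i) ≤ ∑ i ∈ F, enorm (f i) := by
  rw [enorm_eq_norm, toEuc_sum]
  refine (norm_sum_le _ _).trans ?_
  exact Finset.sum_le_sum fun i _ => le_of_eq (enorm_eq_norm (f i)).symm

lemma enorm_neg {d : ℕ} (j : Zd d) : enorm (-j) = enorm j := by
  unfold enorm
  congr 1
  refine Finset.sum_congr rfl fun i _ => ?_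
  show (((-j) i : ℤ) : ℝ)^2 = _
  have : (-j) i = -(j i) := rfl
  rw [this]; push_cast; ring

lemma enorm_smul_sgn {d : ℕ} (b : Bool) (j : Zd d) : enorm (sgn b • j) = enorm j := by
  cases b
  · unfold enorm
    congr 1
    refine Finset.sum_congr rfl fun i _ => ?_
    show (((sgn false • j) i : ℤ) : ℝ)^2 = _
    have : (sgn false • j) i = -(j i) := by simp [sgn]
    rw [this]; push_cast; ring
  · have : sgn true • j = j := by simp [sgn]
    rw [this]

/-- Weight transfer using zero momentum. -/
lemma weight_sum {d r : ℕ} (hr : 2 ≤ r) (l : Fin r) (Jv : Fin r → Idx d)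
    (h : (∑ m, sgn ((Jv m).2) • ((Jv m).1) : Zd d) = 0) :
    1 + inorm (Jv l) ≤ ∑ m ∈ Finset.univ.erase l, (1 + inorm (Jv m)) := by
  have hsplit : sgn ((Jv l).2) • ((Jv l).1)
      + ∑ m ∈ Finset.univ.erase l, sgn ((Jv m).2) • ((Jv m).1) = 0 := by
    rw [← h]
    exact Finset.add_sum_erase Finset.univ (fun m => sgn ((Jv m).2) • ((Jv m).1))
      (Finset.mem_univ l)
  have hval : sgn ((Jv l).2) • ((Jv l).1)
      = -(∑ m ∈ Finset.univ.erase l, sgn ((Jv m).2) • ((Jv m).1)) := by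
    rwa [add_eq_zero_iff_eq_neg] at hsplit
  have hnorm : enorm ((Jv l).1) ≤ ∑ m ∈ Finset.univ.erase l, enorm ((Jv m).1) := by
    calc enorm ((Jv l).1) = enorm (sgn ((Jv l).2) • ((Jv l).1)) := (enorm_smul_sgn _ _).symm
      _ = enorm (∑ m ∈ Finset.univ.erase l, sgn ((Jv m).2) • ((Jv m).1)) := by
          rw [hval, enorm_neg]
      _ ≤ ∑ m ∈ Finset.univ.erase l, enorm (sgn ((Jv m).2) • ((Jv m).1)) :=
          enorm_sum_le _ _
      _ = ∑ m ∈ Finset.univ.erase l, enorm ((Jv m).1) :=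
          Finset.sum_congr rfl fun m _ => enorm_smul_sgn _ _
  have hcard : ((Finset.univ.erase l).card : ℝ) = (r : ℝ) - 1 := by
    rw [Finset.card_erase_of_mem (Finset.mem_univ l), Finset.card_univ, Fintype.card_fin]
    have : 1 ≤ r := le_trans (by norm_num) hr
    push_cast [Nat.cast_sub this]
    ring
  have : ∑ m ∈ Finset.univ.erase l, (1 + inorm (Jv m))
      = ((r : ℝ) - 1) + ∑ m ∈ Finset.univ.erase l, inorm (Jv m) := by
    rw [Finset.sum_add_distrib, Finset.sum_const, nsmul_eq_mul, mul_one, hcard]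
  rw [this]
  have h1 : (1 : ℝ) ≤ (r : ℝ) - 1 := by
    have : (2 : ℝ) ≤ (r : ℝ) := by exact_mod_cast hr
    linarith
  exact add_le_add h1 hnorm

/-- rpow weight transfer. -/
lemma weight_transfer {d r : ℕ} (hr : 2 ≤ r) {s : ℝ} (hs : 0 ≤ s) (l : Fin r)
    (Jv : Fin r → Idx d)
    (h : (∑ m, sgn ((Jv m).2) • ((Jv m).1) : Zd d) = 0) :
    (1 + inorm (Jv l)) ^ s ≤ (r : ℝ) ^ s *
      ∑ m ∈ Finset.univ.erase l, (1 + inorm (Jv m)) ^ s := by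
  have hne : (Finset.univ.erase l).Nonempty := by
    rw [← Finset.card_pos, Finset.card_erase_of_mem (Finset.mem_univ l),
      Finset.card_univ, Fintype.card_fin]
    omega
  obtain ⟨m₀, hm₀, hmax⟩ := Finset.exists_max_image (Finset.univ.erase l)
    (fun m => 1 + inorm (Jv m)) hne
  have hpos : ∀ m : Fin r, (0:ℝ) < 1 + inorm (Jv m) := fun m => by
    have := inorm_nonneg (Jv m); linarith
  have h1 : 1 + inorm (Jv l) ≤ (r : ℝ) * (1 + inorm (Jv m₀)) := by
    calc 1 + inorm (Jv l) ≤ ∑ m ∈ Finset.univ.erase l, (1 + inorm (Jv m)) :=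
          weight_sum hr l Jv h
      _ ≤ ∑ _m ∈ Finset.univ.erase l, (1 + inorm (Jv m₀)) :=
          Finset.sum_le_sum fun m hm => hmax m hm
      _ = ((Finset.univ.erase l).card : ℝ) * (1 + inorm (Jv m₀)) := by
          rw [Finset.sum_const, nsmul_eq_mul]
      _ ≤ (r : ℝ) * (1 + inorm (Jv m₀)) := by
          refine mul_le_mul_of_nonneg_right ?_ (hpos m₀).le
          exact_mod_cast Finset.card_le_univ _ |>.trans (by simp)
  calc (1 + inorm (Jv l)) ^ s ≤ ((r : ℝ) * (1 + inorm (Jv m₀))) ^ s :=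
        Real.rpow_le_rpow (hpos l).le h1 hs
    _ = (r : ℝ) ^ s * (1 + inorm (Jv m₀)) ^ s := by
        refine Real.mul_rpow ?_ (hpos m₀).le
        positivity
    _ ≤ (r : ℝ) ^ s * ∑ m ∈ Finset.univ.erase l, (1 + inorm (Jv m)) ^ s := by
        refine mul_le_mul_of_nonneg_left ?_ (by positivity)
        exact Finset.single_le_sum (f := fun m => (1 + inorm (Jv m)) ^ s)
          (fun m _ => Real.rpow_nonneg (hpos m).le s) hm₀

/-- summability over ℤ. -/
lemma summable_int_weight {p : ℝ} (hp : 1 < p) :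
    Summable (fun n : ℤ => (1 + |(n:ℝ)|) ^ (-p)) := by
  have hsum : Summable (fun n : ℤ => (4:ℝ)^p * (1 / |(n:ℝ) + 1/2| ^ p)) :=
    ((Real.summable_one_div_int_add_rpow (1/2) p).mpr hp).mul_left _
  refine Summable.of_nonneg_of_le (fun n => Real.rpow_nonneg (by positivity) _)
    (fun n => ?_) hsum
  have habs : (0:ℝ) < |(n:ℝ) + 1/2| := by
    rcases le_or_gt 0 n with h | h
    · have : (0:ℝ) ≤ (n:ℝ) := by exact_mod_cast h
      rw [abs_of_pos (by linarith)]; linarith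
    · have hn : n ≤ -1 := by omega
      have : (n:ℝ) ≤ -1 := by exact_mod_cast hn
      rw [abs_of_neg (by linarith)]; linarith
  have hle : |(n:ℝ) + 1/2| ≤ 4 * (1 + |(n:ℝ)|) := by
    have h1 : |(n:ℝ) + 1/2| ≤ |(n:ℝ)| + 1/2 := by
      calc |(n:ℝ) + 1/2| ≤ |(n:ℝ)| + |(1/2 : ℝ)| := abs_add_le _ _
        _ = |(n:ℝ)| + 1/2 := by rw [abs_of_pos (by norm_num : (0:ℝ) < 1/2)]
    have h2 : (0:ℝ) ≤ |(n:ℝ)| := abs_nonneg _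
    linarith
  have hB : (0:ℝ) < |(n:ℝ) + 1/2| ^ p := Real.rpow_pos_of_pos habs p
  have hA : (0:ℝ) < (1 + |(n:ℝ)|) ^ p := Real.rpow_pos_of_pos (by positivity) p
  have hC : (0:ℝ) < (4:ℝ) ^ p := Real.rpow_pos_of_pos (by norm_num) p
  have hkey : |(n:ℝ) + 1/2| ^ p ≤ (4:ℝ)^p * (1 + |(n:ℝ)|) ^ p := by
    calc |(n:ℝ) + 1/2| ^ p ≤ (4 * (1 + |(n:ℝ)|)) ^ p :=
          Real.rpow_le_rpow (abs_nonneg _) hle (by linarith)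
      _ = (4:ℝ)^p * (1 + |(n:ℝ)|) ^ p := Real.mul_rpow (by norm_num) (by positivity)
  rw [Real.rpow_neg (by positivity)]
  have hrw : (4:ℝ)^p * (1 / |(n:ℝ) + 1/2| ^ p) = (4:ℝ)^p / |(n:ℝ) + 1/2| ^ p := by
    ring
  rw [hrw, le_div_iff₀ hB]
  calc ((1 + |(n:ℝ)|) ^ p)⁻¹ * |(n:ℝ) + 1/2| ^ p
      ≤ ((1 + |(n:ℝ)|) ^ p)⁻¹ * ((4:ℝ)^p * (1 + |(n:ℝ)|) ^ p) :=
        mul_le_mul_of_nonneg_left hkey (inv_nonneg.mpr hA.le)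
    _ = (4:ℝ)^p := by field_simp

lemma coord_le_enorm {d : ℕ} (j : Zd d) (i : Fin d) : |((j i : ℤ):ℝ)| ≤ enorm j := by
  rw [← Real.sqrt_sq_eq_abs]
  exact Real.sqrt_le_sqrt (Finset.single_le_sum
    (f := fun i => ((j i : ℤ):ℝ)^2) (fun i _ => sq_nonneg _) (Finset.mem_univ i))

lemma tsum_weight_lt_top {d : ℕ} (hd : 1 ≤ d) {t : ℝ} (ht : (d:ℝ) < t) :
    ∑' j : Zd d, ENNReal.ofReal ((1 + enorm j) ^ (-t)) < ⊤ := by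
  set q := t / d with hq
  have hdpos : (0:ℝ) < d := by exact_mod_cast hd
  have hq1 : 1 < q := (one_lt_div hdpos).mpr ht
  have hqpos : 0 < q := lt_trans one_pos hq1
  have hpt : ∀ j : Zd d, ENNReal.ofReal ((1 + enorm j) ^ (-t))
      ≤ ∏ i, ENNReal.ofReal ((1 + |((j i : ℤ):ℝ)|) ^ (-q)) := by
    intro j
    have hA : (0:ℝ) < 1 + enorm j := by have := enorm_nonneg j; linarith
    have hPpos : (0:ℝ) < ∏ i, (1 + |((j i : ℤ):ℝ)|) :=
      Finset.prod_pos fun i _ => by positivity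
    have hstep1 : (∏ i, (1 + |((j i : ℤ):ℝ)|)) ≤ (1 + enorm j) ^ (d:ℕ) := by
      calc (∏ i, (1 + |((j i : ℤ):ℝ)|)) ≤ ∏ _i : Fin d, (1 + enorm j) :=
            Finset.prod_le_prod (fun i _ => by positivity)
              (fun i _ => by have := coord_le_enorm j i; linarith)
        _ = (1 + enorm j) ^ (d:ℕ) := by
            rw [Finset.prod_const, Finset.card_univ, Fintype.card_fin]
    have hreal : (1 + enorm j) ^ (-t) ≤ ∏ i, (1 + |((j i : ℤ):ℝ)|) ^ (-q) := by
      have e1 : (1 + enorm j) ^ (-t) = ((1 + enorm j) ^ (d:ℕ)) ^ (-q) := by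
        have hdq : (d:ℝ) * -q = -t := by
          rw [hq]
          field_simp
        rw [← hdq, Real.rpow_mul hA.le, Real.rpow_natCast]
      rw [e1]
      calc ((1 + enorm j) ^ (d:ℕ)) ^ (-q)
          ≤ (∏ i, (1 + |((j i : ℤ):ℝ)|)) ^ (-q) :=
            Real.rpow_le_rpow_of_nonpos hPpos hstep1 (by linarith)
        _ = ∏ i, (1 + |((j i : ℤ):ℝ)|) ^ (-q) := by
            rw [← Real.finset_prod_rpow _ _ (fun i _ => by positivity) (-q)]
    calc ENNReal.ofReal ((1 + enorm j) ^ (-t))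
        ≤ ENNReal.ofReal (∏ i, (1 + |((j i : ℤ):ℝ)|) ^ (-q)) :=
          ENNReal.ofReal_le_ofReal hreal
      _ = ∏ i, ENNReal.ofReal ((1 + |((j i : ℤ):ℝ)|) ^ (-q)) :=
          ENNReal.ofReal_prod_of_nonneg fun i _ => Real.rpow_nonneg (by positivity) _
  have hg : ∑' n : ℤ, ENNReal.ofReal ((1 + |(n:ℝ)|) ^ (-q)) < ⊤ := by
    rw [← ENNReal.ofReal_tsum_of_nonneg (fun n => Real.rpow_nonneg (by positivity) _)
      (summable_int_weight hq1)]
    exact ENNReal.ofReal_lt_top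
  calc ∑' j : Zd d, ENNReal.ofReal ((1 + enorm j) ^ (-t))
      ≤ ∑' j : Zd d, ∏ i, ENNReal.ofReal ((1 + |((j i : ℤ):ℝ)|) ^ (-q)) :=
        ENNReal.tsum_le_tsum hpt
    _ = (∑' n : ℤ, ENNReal.ofReal ((1 + |(n:ℝ)|) ^ (-q))) ^ (Fintype.card (Fin d)) :=
        tsum_pi_prod (ι := Fin d)
          (fun n : ℤ => ENNReal.ofReal ((1 + |(n:ℝ)|) ^ (-q)))
    _ < ⊤ := ENNReal.pow_lt_top hg

lemma tsum_weight_idx_lt_top {d : ℕ} (hd : 1 ≤ d) {t : ℝ} (ht : (d:ℝ) < t) :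
    ∑' J : Idx d, ENNReal.ofReal ((1 + inorm J) ^ (-t)) < ⊤ := by
  have h := tsum_weight_lt_top hd ht
  calc ∑' J : Idx d, ENNReal.ofReal ((1 + inorm J) ^ (-t))
      = ∑' j : Zd d, ∑' b : Bool, ENNReal.ofReal ((1 + inorm (j, b)) ^ (-t)) :=
        ENNReal.tsum_prod'
    _ = ∑' j : Zd d, (ENNReal.ofReal ((1 + enorm j) ^ (-t))
        + ENNReal.ofReal ((1 + enorm j) ^ (-t))) :=
        tsum_congr fun j => by rw [tsum_bool]; rfl
    _ = ∑' j : Zd d, ENNReal.ofReal ((1 + enorm j) ^ (-t))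
        + ∑' j : Zd d, ENNReal.ofReal ((1 + enorm j) ^ (-t)) := ENNReal.tsum_add
    _ < ⊤ := by
        exact ENNReal.add_lt_top.mpr ⟨h, h⟩



-- ENNReal-valued building blocks
noncomputable def wgt (d : ℕ) (s : ℝ) (J : Idx d) : ℝ≥0∞ :=
  ENNReal.ofReal ((1 + inorm J) ^ s)
noncomputable def aE (d : ℕ) (u : Seq d) (J : Idx d) : ℝ≥0∞ :=
  ENNReal.ofReal (‖u J‖)
noncomputable def WE (d : ℕ) (s : ℝ) (u : Seq d) (J : Idx d) : ℝ≥0∞ :=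
  wgt d s J * aE d u J

section helpers

variable {ι : Type*} [DecidableEq ι] {α : Type*}

lemma piSplitAt_symm_apply_eq (i : ι) (x : α) (T : {j // j ≠ i} → α) :
    (Equiv.piSplitAt i (fun _ => α)).symm (x, T) i = x := by
  simp [Equiv.piSplitAt_symm_apply]

lemma piSplitAt_symm_apply_ne (i : ι) (x : α) (T : {j // j ≠ i} → α)
    {j : ι} (hj : j ≠ i) :
    (Equiv.piSplitAt i (fun _ => α)).symm (x, T) j = T ⟨j, hj⟩ := by
  simp [Equiv.piSplitAt_symm_apply, hj]

lemma sum_erase_subtype [Fintype ι] {M : Type*} [AddCommMonoid M] (i : ι) (g : ι → M) :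
    ∑ j ∈ Finset.univ.erase i, g j = ∑ x : {j // j ≠ i}, g ↑x :=
  Finset.sum_subtype _ (by simp) g

lemma prod_erase_subtype [Fintype ι] {M : Type*} [CommMonoid M] (i : ι) (g : ι → M) :
    ∏ j ∈ Finset.univ.erase i, g j = ∏ x : {j // j ≠ i}, g ↑x :=
  Finset.prod_subtype _ (by simp) g

end helpers

/-- counting solutions of `sgn σ • j = v`. -/
lemma count_two {d : ℕ} (v : Zd d) :
    ∑' J : Idx d, (if sgn J.2 • J.1 = v then (1:ℝ≥0∞) else 0) = 2 := by
  rw [ENNReal.tsum_prod' (f := fun J : Idx d => (if sgn J.2 • J.1 = v then (1:ℝ≥0∞) else 0))]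
  have hb : ∀ j : Zd d, ∑' b : Bool, (if sgn b • j = v then (1:ℝ≥0∞) else 0)
      = (if j = -v then (1:ℝ≥0∞) else 0) + (if j = v then (1:ℝ≥0∞) else 0) := by
    intro j
    rw [tsum_bool]
    congr 1
    · refine if_congr ?_ rfl rfl
      constructor
      · intro h; rw [show sgn false • j = -j by simp [sgn]] at h
        simpa using (congrArg Neg.neg h.symm).symm
      · intro h; rw [show sgn false • j = -j by simp [sgn], h, neg_neg]
    · refine if_congr ?_ rfl rfl
      rw [show sgn true • j = j by simp [sgn]]
  calc ∑' (j : Zd d) (b : Bool), (if sgn b • j = v then (1:ℝ≥0∞) else 0)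
      = ∑' j : Zd d, ((if j = -v then (1:ℝ≥0∞) else 0) + (if j = v then (1:ℝ≥0∞) else 0)) :=
        tsum_congr hb
    _ = (∑' j : Zd d, (if j = -v then (1:ℝ≥0∞) else 0))
        + ∑' j : Zd d, (if j = v then (1:ℝ≥0∞) else 0) := ENNReal.tsum_add
    _ = 1 + 1 := by rw [tsum_ite_eq, tsum_ite_eq]
    _ = 2 := by norm_num

/-- folding over the 2-to-1 map `K ↦ -(sgn K.2 • K.1)`. -/
lemma tsum_two_to_one {d : ℕ} (f : Zd d → ℝ≥0∞) :
    ∑' K : Idx d, f (-(sgn K.2 • K.1)) = 2 * ∑' c : Zd d, f c := by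
  rw [ENNReal.tsum_prod' (f := fun K : Idx d => f (-(sgn K.2 • K.1)))]
  have hb : ∀ j : Zd d, ∑' b : Bool, f (-(sgn b • j)) = f j + f (-j) := by
    intro j
    rw [tsum_bool]
    congr 1
    · rw [show sgn false • j = -j by simp [sgn], neg_neg]
    · rw [show sgn true • j = j by simp [sgn]]
  calc ∑' (j : Zd d) (b : Bool), f (-(sgn b • j))
      = ∑' j : Zd d, (f j + f (-j)) := tsum_congr hb
    _ = (∑' j : Zd d, f j) + ∑' j : Zd d, f (-j) := ENNReal.tsum_add
    _ = (∑' j : Zd d, f j) + ∑' j : Zd d, f j := by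
        congr 1
        exact (Equiv.neg (Zd d)).tsum_eq f
    _ = 2 * ∑' c : Zd d, f c := by ring

lemma rpow_half_mul (x : ℝ≥0∞) : x ^ (1/2:ℝ) * x ^ (1/2:ℝ) = x := by
  rw [← sq, ← ENNReal.rpow_natCast (x ^ (1/2:ℝ)) 2, ← ENNReal.rpow_mul]
  norm_num

noncomputable def Gfun (d r : ℕ) (s : ℝ) (u : Seq d) (l m : Fin r) (K : Idx d) : ℝ≥0∞ :=
  ∑' Jv : Fin r → Idx d,
    if Jv l = K ∧ momentum Jv = 0 then
      wgt d s (Jv m) * ∏ m' ∈ Finset.univ.erase l, aE d u (Jv m')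
    else 0

noncomputable def muS (d : ℕ) {r : ℕ} (l : Fin r)
    (T : {m' : Fin r // m' ≠ l} → Idx d) : Zd d :=
  ∑ x, sgn ((T x).2) • ((T x).1)

noncomputable def QQ (d : ℕ) {r : ℕ} (u : Seq d) {l : Fin r}
    (mh : {m' : Fin r // m' ≠ l}) (T : {m' : Fin r // m' ≠ l} → Idx d) : ℝ≥0∞ :=
  ∏ x ∈ Finset.univ.erase mh, aE d u (T x)

noncomputable def Hc (d : ℕ) {r : ℕ} (s : ℝ) (u : Seq d) {l : Fin r}
    (mh : {m' : Fin r // m' ≠ l}) (c : Zd d) : ℝ≥0∞ :=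
  ∑' T : {m' : Fin r // m' ≠ l} → Idx d,
    if muS d l T = c then WE d s u (T mh) * QQ d u mh T else 0

section splits

variable {d : ℕ} {ι : Type*} [Fintype ι] [DecidableEq ι]

lemma sum_split_at (i : ι) {M : Type*} [AddCommMonoid M]
    (g : Idx d → M) (J₀ : Idx d) (T : {j // j ≠ i} → Idx d) :
    ∑ j, g ((Equiv.piSplitAt i (fun _ => Idx d)).symm (J₀, T) j)
      = g J₀ + ∑ x : {j // j ≠ i}, g (T x) := by
  rw [← Finset.add_sum_erase Finset.univ _ (Finset.mem_univ i), piSplitAt_symm_apply_eq,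
    sum_erase_subtype i]
  congr 1
  exact Finset.sum_congr rfl fun x _ => by rw [piSplitAt_symm_apply_ne i J₀ T x.2]

lemma prod_erase_split (i : ι) {M : Type*} [CommMonoid M]
    (g : Idx d → M) (J₀ : Idx d) (T : {j // j ≠ i} → Idx d) :
    ∏ j ∈ Finset.univ.erase i, g ((Equiv.piSplitAt i (fun _ => Idx d)).symm (J₀, T) j)
      = ∏ x : {j // j ≠ i}, g (T x) := by
  rw [prod_erase_subtype i]
  exact Finset.prod_congr rfl fun x _ => by rw [piSplitAt_symm_apply_ne i J₀ T x.2]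

end splits

lemma Gfun_eq_Hc {d r : ℕ} (s : ℝ) (u : Seq d) (l m : Fin r) (hml : m ≠ l) (K : Idx d) :
    Gfun d r s u l m K
      = Hc d s u (⟨m, hml⟩ : {m' : Fin r // m' ≠ l}) (-(sgn K.2 • K.1)) := by
  classical
  unfold Gfun
  rw [← Equiv.tsum_eq (Equiv.piSplitAt l (fun _ => Idx d)).symm
    (fun Jv : Fin r → Idx d => if Jv l = K ∧ momentum Jv = 0 then
      wgt d s (Jv m) * ∏ m' ∈ Finset.univ.erase l, aE d u (Jv m') else 0)]
  rw [ENNReal.tsum_prod']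
  have hval : ∀ (J₀ : Idx d) (T : {m' : Fin r // m' ≠ l} → Idx d),
      wgt d s (((Equiv.piSplitAt l (fun _ => Idx d)).symm (J₀, T)) m)
        * ∏ m' ∈ Finset.univ.erase l,
            aE d u (((Equiv.piSplitAt l (fun _ => Idx d)).symm (J₀, T)) m')
      = WE d s u (T ⟨m, hml⟩) * QQ d u ⟨m, hml⟩ T := by
    intro J₀ T
    rw [piSplitAt_symm_apply_ne l J₀ T hml, prod_erase_split l (aE d u) J₀ T,
      ← Finset.mul_prod_erase Finset.univ (fun x => aE d u (T x))
        (Finset.mem_univ (⟨m, hml⟩ : {m' : Fin r // m' ≠ l}))]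
    unfold WE QQ
    ring
  have hmom : ∀ (J₀ : Idx d) (T : {m' : Fin r // m' ≠ l} → Idx d),
      momentum ((Equiv.piSplitAt l (fun _ => Idx d)).symm (J₀, T))
        = sgn J₀.2 • J₀.1 + muS d l T := by
    intro J₀ T
    exact sum_split_at l (fun J : Idx d => sgn J.2 • J.1) J₀ T
  have key : ∀ J₀ : Idx d, (∑' T : {m' : Fin r // m' ≠ l} → Idx d,
      if ((Equiv.piSplitAt l (fun _ => Idx d)).symm (J₀, T)) l = K
          ∧ momentum ((Equiv.piSplitAt l (fun _ => Idx d)).symm (J₀, T)) = 0 then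
        wgt d s (((Equiv.piSplitAt l (fun _ => Idx d)).symm (J₀, T)) m)
          * ∏ m' ∈ Finset.univ.erase l,
              aE d u (((Equiv.piSplitAt l (fun _ => Idx d)).symm (J₀, T)) m')
      else 0)
      = if J₀ = K then Hc d s u (⟨m, hml⟩ : {m' : Fin r // m' ≠ l}) (-(sgn K.2 • K.1))
        else 0 := by
    intro J₀
    by_cases hJ : J₀ = K
    · subst hJ
      rw [if_pos rfl]
      unfold Hc
      refine tsum_congr fun T => ?_
      rw [hval]
      refine if_congr ?_ rfl rfl
      rw [piSplitAt_symm_apply_eq, hmom]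
      constructor
      · rintro ⟨-, h⟩
        exact eq_neg_of_add_eq_zero_right h
      · intro h
        exact ⟨rfl, by rw [h]; simp⟩
    · rw [if_neg hJ]
      have : ∀ T : {m' : Fin r // m' ≠ l} → Idx d,
          (if ((Equiv.piSplitAt l (fun _ => Idx d)).symm (J₀, T)) l = K
              ∧ momentum ((Equiv.piSplitAt l (fun _ => Idx d)).symm (J₀, T)) = 0 then
            wgt d s (((Equiv.piSplitAt l (fun _ => Idx d)).symm (J₀, T)) m)
              * ∏ m' ∈ Finset.univ.erase l,
                  aE d u (((Equiv.piSplitAt l (fun _ => Idx d)).symm (J₀, T)) m')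
          else 0) = 0 := by
        intro T
        rw [if_neg]
        rintro ⟨h1, -⟩
        rw [piSplitAt_symm_apply_eq] at h1
        exact hJ h1
      rw [tsum_congr this, tsum_zero]
  rw [tsum_congr key, tsum_ite_eq]

lemma A1_bound {d r : ℕ} (u : Seq d) (l : Fin r) (mh : {m' : Fin r // m' ≠ l}) (c : Zd d) :
    (∑' T : {m' : Fin r // m' ≠ l} → Idx d, if muS d l T = c then QQ d u mh T else 0)
      = 2 * (∑' J : Idx d, aE d u J)
          ^ (Fintype.card {x : {m' : Fin r // m' ≠ l} // x ≠ mh}) := by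
  classical
  rw [← Equiv.tsum_eq (Equiv.piSplitAt mh (fun _ => Idx d)).symm
    (fun T : {m' : Fin r // m' ≠ l} → Idx d => if muS d l T = c then QQ d u mh T else 0)]
  rw [ENNReal.tsum_prod']
  have hQ : ∀ (J₁ : Idx d) (Rst : {x : {m' : Fin r // m' ≠ l} // x ≠ mh} → Idx d),
      QQ d u mh ((Equiv.piSplitAt mh (fun _ => Idx d)).symm (J₁, Rst))
        = ∏ y : {x : {m' : Fin r // m' ≠ l} // x ≠ mh}, aE d u (Rst y) := by
    intro J₁ Rst
    exact prod_erase_split mh (aE d u) J₁ Rst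
  have hμ : ∀ (J₁ : Idx d) (Rst : {x : {m' : Fin r // m' ≠ l} // x ≠ mh} → Idx d),
      muS d l ((Equiv.piSplitAt mh (fun _ => Idx d)).symm (J₁, Rst))
        = sgn J₁.2 • J₁.1 + ∑ y : {x : {m' : Fin r // m' ≠ l} // x ≠ mh},
            sgn ((Rst y).2) • ((Rst y).1) := by
    intro J₁ Rst
    exact sum_split_at mh (fun J : Idx d => sgn J.2 • J.1) J₁ Rst
  calc (∑' (J₁ : Idx d) (Rst : {x : {m' : Fin r // m' ≠ l} // x ≠ mh} → Idx d),
        if muS d l ((Equiv.piSplitAt mh (fun _ => Idx d)).symm (J₁, Rst)) = c then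
          QQ d u mh ((Equiv.piSplitAt mh (fun _ => Idx d)).symm (J₁, Rst)) else 0)
      = ∑' (Rst : {x : {m' : Fin r // m' ≠ l} // x ≠ mh} → Idx d) (J₁ : Idx d),
          (∏ y : {x : {m' : Fin r // m' ≠ l} // x ≠ mh}, aE d u (Rst y))
            * (if sgn J₁.2 • J₁.1
                = c - ∑ y : {x : {m' : Fin r // m' ≠ l} // x ≠ mh},
                    sgn ((Rst y).2) • ((Rst y).1) then 1 else 0) := by
        rw [ENNReal.tsum_comm]
        refine tsum_congr fun Rst => tsum_congr fun J₁ => ?_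
        rw [hQ, hμ]
        by_cases hcond : sgn J₁.2 • J₁.1
            = c - ∑ y : {x : {m' : Fin r // m' ≠ l} // x ≠ mh}, sgn ((Rst y).2) • ((Rst y).1)
        · rw [if_pos hcond, if_pos (by rw [hcond]; abel), mul_one]
        · rw [if_neg hcond, if_neg (fun h => hcond (by rw [eq_sub_iff_add_eq]; exact h)),
            mul_zero]
    _ = ∑' (Rst : {x : {m' : Fin r // m' ≠ l} // x ≠ mh} → Idx d),
          (∏ y : {x : {m' : Fin r // m' ≠ l} // x ≠ mh}, aE d u (Rst y)) * 2 := by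
        refine tsum_congr fun Rst => ?_
        rw [ENNReal.tsum_mul_left, count_two]
    _ = 2 * (∑' J : Idx d, aE d u J)
          ^ (Fintype.card {x : {m' : Fin r // m' ≠ l} // x ≠ mh}) := by
        rw [ENNReal.tsum_mul_right, tsum_pi_prod, mul_comm]

lemma A2_total {d r : ℕ} (s : ℝ) (u : Seq d) (l : Fin r) (mh : {m' : Fin r // m' ≠ l}) :
    ∑' c : Zd d, (∑' T : {m' : Fin r // m' ≠ l} → Idx d,
        if muS d l T = c then (WE d s u (T mh))^2 * QQ d u mh T else 0)
      = (∑' J : Idx d, (WE d s u J)^2) * (∑' J : Idx d, aE d u J)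
          ^ (Fintype.card {x : {m' : Fin r // m' ≠ l} // x ≠ mh}) := by
  classical
  rw [ENNReal.tsum_comm]
  have hcollapse : ∀ T : {m' : Fin r // m' ≠ l} → Idx d,
      (∑' c : Zd d, if muS d l T = c then (WE d s u (T mh))^2 * QQ d u mh T else 0)
        = (WE d s u (T mh))^2 * QQ d u mh T := by
    intro T
    have : ∀ c : Zd d, (if muS d l T = c then (WE d s u (T mh))^2 * QQ d u mh T else 0)
        = (if c = muS d l T then (WE d s u (T mh))^2 * QQ d u mh T else 0) :=
      fun c => if_congr eq_comm rfl rfl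
    rw [tsum_congr this, tsum_ite_eq]
  rw [tsum_congr hcollapse]
  rw [← Equiv.tsum_eq (Equiv.piSplitAt mh (fun _ => Idx d)).symm
    (fun T : {m' : Fin r // m' ≠ l} → Idx d => (WE d s u (T mh))^2 * QQ d u mh T)]
  rw [ENNReal.tsum_prod']
  calc (∑' (J₁ : Idx d) (Rst : {x : {m' : Fin r // m' ≠ l} // x ≠ mh} → Idx d),
        (WE d s u (((Equiv.piSplitAt mh (fun _ => Idx d)).symm (J₁, Rst)) mh))^2
          * QQ d u mh ((Equiv.piSplitAt mh (fun _ => Idx d)).symm (J₁, Rst)))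
      = ∑' (J₁ : Idx d), (WE d s u J₁)^2
          * ∑' (Rst : {x : {m' : Fin r // m' ≠ l} // x ≠ mh} → Idx d),
              ∏ y : {x : {m' : Fin r // m' ≠ l} // x ≠ mh}, aE d u (Rst y) := by
        refine tsum_congr fun J₁ => ?_
        rw [← ENNReal.tsum_mul_left]
        refine tsum_congr fun Rst => ?_
        have hQ : QQ d u mh ((Equiv.piSplitAt mh (fun _ => Idx d)).symm (J₁, Rst))
            = ∏ y : {x : {m' : Fin r // m' ≠ l} // x ≠ mh}, aE d u (Rst y) :=
          prod_erase_split mh (aE d u) J₁ Rst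
        rw [piSplitAt_symm_apply_eq, hQ]
    _ = (∑' J : Idx d, (WE d s u J)^2) * (∑' J : Idx d, aE d u J)
          ^ (Fintype.card {x : {m' : Fin r // m' ≠ l} // x ≠ mh}) := by
        rw [ENNReal.tsum_mul_right, tsum_pi_prod]

lemma card_sub1 {r : ℕ} (l : Fin r) : Fintype.card {m' : Fin r // m' ≠ l} = r - 1 := by
  rw [Fintype.card_subtype_compl, Fintype.card_subtype_eq, Fintype.card_fin]

lemma card_sub2 {r : ℕ} (l m : Fin r) (hml : m ≠ l) :
    Fintype.card {x : {m' : Fin r // m' ≠ l} // x ≠ (⟨m, hml⟩ : {m' : Fin r // m' ≠ l})}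
      = r - 2 := by
  rw [Fintype.card_subtype_compl, Fintype.card_subtype_eq, card_sub1]
  omega

lemma core_bound {d r : ℕ} (s : ℝ) (u : Seq d) (l m : Fin r) (hml : m ≠ l) :
    ∑' K : Idx d, (Gfun d r s u l m K)^2
      ≤ 4 * (∑' J : Idx d, (WE d s u J)^2)
          * ((∑' J : Idx d, aE d u J) ^ (r - 2))^2 := by
  classical
  have hcard := card_sub2 l m hml
  have hCS : ∀ c : Zd d, (Hc d s u (⟨m, hml⟩ : {m' : Fin r // m' ≠ l}) c)^2
      ≤ (∑' T : {m' : Fin r // m' ≠ l} → Idx d,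
          if muS d l T = c then
            (WE d s u (T ⟨m, hml⟩))^2 * QQ d u ⟨m, hml⟩ T else 0)
        * (2 * (∑' J : Idx d, aE d u J) ^ (r-2)) := by
    intro c
    have hfg : ∀ T : {m' : Fin r // m' ≠ l} → Idx d,
        (if muS d l T = c then WE d s u (T ⟨m, hml⟩) * QQ d u ⟨m, hml⟩ T else 0)
          = (if muS d l T = c then
              WE d s u (T ⟨m, hml⟩) * (QQ d u ⟨m, hml⟩ T)^(1/2:ℝ) else 0)
            * (if muS d l T = c then (QQ d u ⟨m, hml⟩ T)^(1/2:ℝ) else 0) := by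
      intro T
      by_cases h : muS d l T = c
      · rw [if_pos h, if_pos h, if_pos h, mul_assoc, rpow_half_mul]
      · rw [if_neg h, if_neg h, if_neg h, mul_zero]
    have step : (Hc d s u (⟨m, hml⟩ : {m' : Fin r // m' ≠ l}) c)^2
        ≤ (∑' T : {m' : Fin r // m' ≠ l} → Idx d,
            if muS d l T = c then
              (WE d s u (T ⟨m, hml⟩))^2 * QQ d u ⟨m, hml⟩ T else 0)
          * (∑' T : {m' : Fin r // m' ≠ l} → Idx d,
              if muS d l T = c then QQ d u ⟨m, hml⟩ T else 0) := by
      have h1 : Hc d s u (⟨m, hml⟩ : {m' : Fin r // m' ≠ l}) c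
          = ∑' T : {m' : Fin r // m' ≠ l} → Idx d,
              (if muS d l T = c then
                WE d s u (T ⟨m, hml⟩) * (QQ d u ⟨m, hml⟩ T)^(1/2:ℝ) else 0)
              * (if muS d l T = c then (QQ d u ⟨m, hml⟩ T)^(1/2:ℝ) else 0) := by
        unfold Hc
        exact tsum_congr hfg
      rw [h1]
      refine le_trans (tsum_mul_le_sq _ _) (le_of_eq ?_)
      congr 1
      · refine tsum_congr fun T => ?_
        by_cases h : muS d l T = c
        · rw [if_pos h, if_pos h, mul_pow, ← ENNReal.rpow_natCast ((QQ d u ⟨m, hml⟩ T)^(1/2:ℝ)) 2,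
            ← ENNReal.rpow_mul]
          norm_num
        · rw [if_neg h, if_neg h]
          simp
      · refine tsum_congr fun T => ?_
        by_cases h : muS d l T = c
        · rw [if_pos h, if_pos h, ← ENNReal.rpow_natCast ((QQ d u ⟨m, hml⟩ T)^(1/2:ℝ)) 2,
            ← ENNReal.rpow_mul]
          norm_num
        · rw [if_neg h, if_neg h]
          simp
    refine step.trans ?_
    refine mul_le_mul_right (le_of_eq ?_) _
    rw [A1_bound u l ⟨m, hml⟩ c, hcard]
  calc ∑' K : Idx d, (Gfun d r s u l m K)^2
      = ∑' K : Idx d, (Hc d s u (⟨m, hml⟩ : {m' : Fin r // m' ≠ l}) (-(sgn K.2 • K.1)))^2 :=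
        tsum_congr fun K => by rw [Gfun_eq_Hc s u l m hml K]
    _ = 2 * ∑' c : Zd d, (Hc d s u (⟨m, hml⟩ : {m' : Fin r // m' ≠ l}) c)^2 :=
        tsum_two_to_one (fun c => (Hc d s u (⟨m, hml⟩ : {m' : Fin r // m' ≠ l}) c)^2)
    _ ≤ 2 * ∑' c : Zd d, ((∑' T : {m' : Fin r // m' ≠ l} → Idx d,
          if muS d l T = c then
            (WE d s u (T ⟨m, hml⟩))^2 * QQ d u ⟨m, hml⟩ T else 0)
        * (2 * (∑' J : Idx d, aE d u J) ^ (r-2))) :=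
        mul_le_mul_right (ENNReal.tsum_le_tsum hCS) 2
    _ = 2 * ((∑' c : Zd d, ∑' T : {m' : Fin r // m' ≠ l} → Idx d,
          if muS d l T = c then
            (WE d s u (T ⟨m, hml⟩))^2 * QQ d u ⟨m, hml⟩ T else 0)
        * (2 * (∑' J : Idx d, aE d u J) ^ (r-2))) := by
        rw [ENNReal.tsum_mul_right]
    _ = 2 * (((∑' J : Idx d, (WE d s u J)^2) * (∑' J : Idx d, aE d u J) ^ (r-2))
        * (2 * (∑' J : Idx d, aE d u J) ^ (r-2))) := by
        rw [A2_total s u l ⟨m, hml⟩, hcard]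
    _ = 4 * (∑' J : Idx d, (WE d s u J)^2)
        * ((∑' J : Idx d, aE d u J) ^ (r - 2))^2 := by
        ring

lemma inorm_nonneg' {d : ℕ} (J : Idx d) : 0 ≤ inorm J := Real.sqrt_nonneg _

lemma wgt_transfer_E {d r : ℕ} (hr : 2 ≤ r) {s : ℝ} (hs : 0 ≤ s) (l : Fin r)
    (Jv : Fin r → Idx d) (h : momentum Jv = 0) :
    wgt d s (Jv l) ≤ ENNReal.ofReal ((r:ℝ)^s)
      * ∑ m ∈ Finset.univ.erase l, wgt d s (Jv m) := by
  have h1 : (0:ℝ) ≤ (r:ℝ)^s := Real.rpow_nonneg (by positivity) s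
  calc wgt d s (Jv l)
      ≤ ENNReal.ofReal ((r:ℝ)^s * ∑ m ∈ Finset.univ.erase l, (1 + inorm (Jv m))^s) :=
        ENNReal.ofReal_le_ofReal (weight_transfer hr hs l Jv h)
    _ = ENNReal.ofReal ((r:ℝ)^s)
        * ∑ m ∈ Finset.univ.erase l, wgt d s (Jv m) := by
        rw [ENNReal.ofReal_mul h1, ENNReal.ofReal_sum_of_nonneg
          (fun m _ => Real.rpow_nonneg (by have := inorm_nonneg' (Jv m); linarith) s)]
        rfl

lemma pderiv_weighted_bound {d r : ℕ} (hr : 2 ≤ r) {s : ℝ} (hs : 0 ≤ s)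
    (P : Poly d r) (u : Seq d) {B : ℝ} (hB : ∀ Jv, ‖P.coeff Jv‖ ≤ B)
    (K : Idx d) :
    wgt d s K * ENNReal.ofReal (‖P.pderiv K u‖)
      ≤ (ENNReal.ofReal B * ENNReal.ofReal ((r:ℝ)^s)) *
          ∑ l : Fin r, ∑ m ∈ Finset.univ.erase l, Gfun d r s u l m K := by
  classical
  have stepa : ENNReal.ofReal (‖P.pderiv K u‖)
      ≤ ∑' Jv : Fin r → Idx d, ∑ l : Fin r,
          (if Jv l = K ∧ momentum Jv = 0 then
            ENNReal.ofReal B * ∏ m' ∈ Finset.univ.erase l, aE d u (Jv m') else 0) := by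
    refine le_trans (ofReal_abs_tsum_le _) (ENNReal.tsum_le_tsum fun Jv => ?_)
    have tri : ENNReal.ofReal (‖∑ l : Fin r, if Jv l = K then
          P.coeff Jv * ∏ mm ∈ Finset.univ.erase l, u (Jv mm) else 0‖)
        ≤ ∑ l : Fin r, ENNReal.ofReal (‖if Jv l = K then P.coeff Jv * ∏ mm ∈ Finset.univ.erase l, u (Jv mm) else 0‖) := by
      calc ENNReal.ofReal (‖∑ l : Fin r, if Jv l = K then
            P.coeff Jv * ∏ mm ∈ Finset.univ.erase l, u (Jv mm) else 0‖)
          ≤ ENNReal.ofReal (∑ l : Fin r, ‖if Jv l = K then P.coeff Jv * ∏ mm ∈ Finset.univ.erase l, u (Jv mm) else 0‖) :=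
            ENNReal.ofReal_le_ofReal (norm_sum_le _ _)
        _ = _ := ENNReal.ofReal_sum_of_nonneg fun l _ => norm_nonneg _
    refine le_trans tri (Finset.sum_le_sum fun l _ => ?_)
    by_cases h1 : Jv l = K
    · rw [if_pos h1]
      by_cases h0 : P.coeff Jv = 0
      · rw [h0, zero_mul, norm_zero, ENNReal.ofReal_zero]
        exact zero_le
      · have hm : momentum Jv = 0 := P.mom Jv h0
        have hB0 : 0 ≤ B := le_trans (norm_nonneg _) (hB Jv)
        rw [if_pos ⟨h1, hm⟩]
        calc ENNReal.ofReal (‖P.coeff Jv * ∏ mm ∈ Finset.univ.erase l, u (Jv mm)‖)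
            = ENNReal.ofReal (‖P.coeff Jv‖
                * ∏ mm ∈ Finset.univ.erase l, ‖u (Jv mm)‖) := by
              rw [norm_mul, norm_prod]
          _ ≤ ENNReal.ofReal (B * ∏ mm ∈ Finset.univ.erase l, ‖u (Jv mm)‖) :=
              ENNReal.ofReal_le_ofReal (mul_le_mul_of_nonneg_right (hB Jv)
                (Finset.prod_nonneg fun mm _ => norm_nonneg _))
          _ = ENNReal.ofReal B * ∏ mm ∈ Finset.univ.erase l, aE d u (Jv mm) := by
              rw [ENNReal.ofReal_mul hB0, ENNReal.ofReal_prod_of_nonneg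
                (fun mm _ => norm_nonneg _)]
              rfl
    · rw [if_neg h1, if_neg (fun hc => h1 hc.1), norm_zero, ENNReal.ofReal_zero]
  calc wgt d s K * ENNReal.ofReal (‖P.pderiv K u‖)
      ≤ wgt d s K * ∑' Jv : Fin r → Idx d, ∑ l : Fin r,
          (if Jv l = K ∧ momentum Jv = 0 then
            ENNReal.ofReal B * ∏ m' ∈ Finset.univ.erase l, aE d u (Jv m') else 0) :=
        mul_le_mul_right stepa _
    _ = ∑' Jv : Fin r → Idx d, ∑ l : Fin r, wgt d s K *
          (if Jv l = K ∧ momentum Jv = 0 then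
            ENNReal.ofReal B * ∏ m' ∈ Finset.univ.erase l, aE d u (Jv m') else 0) := by
        rw [← ENNReal.tsum_mul_left]
        exact tsum_congr fun Jv => Finset.mul_sum _ _ _
    _ ≤ ∑' Jv : Fin r → Idx d, ∑ l : Fin r, ∑ m ∈ Finset.univ.erase l,
          (ENNReal.ofReal B * ENNReal.ofReal ((r:ℝ)^s)) *
            (if Jv l = K ∧ momentum Jv = 0 then
              wgt d s (Jv m) * ∏ m' ∈ Finset.univ.erase l, aE d u (Jv m') else 0) := by
        refine ENNReal.tsum_le_tsum fun Jv => Finset.sum_le_sum fun l _ => ?_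
        by_cases hc : Jv l = K ∧ momentum Jv = 0
        · rw [if_pos hc]
          have hw : wgt d s K ≤ ENNReal.ofReal ((r:ℝ)^s)
              * ∑ m ∈ Finset.univ.erase l, wgt d s (Jv m) := by
            rw [← hc.1]
            exact wgt_transfer_E hr hs l Jv hc.2
          calc wgt d s K * (ENNReal.ofReal B * ∏ m' ∈ Finset.univ.erase l, aE d u (Jv m'))
              ≤ (ENNReal.ofReal ((r:ℝ)^s) * ∑ m ∈ Finset.univ.erase l, wgt d s (Jv m))
                * (ENNReal.ofReal B * ∏ m' ∈ Finset.univ.erase l, aE d u (Jv m')) :=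
                mul_le_mul_left hw _
            _ = ∑ m ∈ Finset.univ.erase l,
                (ENNReal.ofReal B * ENNReal.ofReal ((r:ℝ)^s)) *
                  (wgt d s (Jv m) * ∏ m' ∈ Finset.univ.erase l, aE d u (Jv m')) := by
                rw [Finset.mul_sum, Finset.sum_mul]
                exact Finset.sum_congr rfl fun m _ => by ring
            _ = ∑ m ∈ Finset.univ.erase l,
                (ENNReal.ofReal B * ENNReal.ofReal ((r:ℝ)^s)) *
                  (if Jv l = K ∧ momentum Jv = 0 then
                    wgt d s (Jv m) * ∏ m' ∈ Finset.univ.erase l, aE d u (Jv m') else 0) := by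
                exact Finset.sum_congr rfl fun m _ => by rw [if_pos hc]
        · rw [if_neg hc, mul_zero]
          exact zero_le
    _ = (ENNReal.ofReal B * ENNReal.ofReal ((r:ℝ)^s)) *
          ∑ l : Fin r, ∑ m ∈ Finset.univ.erase l, Gfun d r s u l m K := by
        rw [Summable.tsum_finsetSum fun l _ => ENNReal.summable, Finset.mul_sum]
        refine Finset.sum_congr rfl fun l _ => ?_
        rw [Summable.tsum_finsetSum fun m _ => ENNReal.summable, Finset.mul_sum]
        refine Finset.sum_congr rfl fun m _ => ?_
        rw [ENNReal.tsum_mul_left]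
        rfl



lemma sq_weight_ofReal {d : ℕ} (s : ℝ) (J : Idx d) (z : ℂ) :
    (wgt d s J * ENNReal.ofReal (‖z‖))^2
      = ENNReal.ofReal ((1 + inorm J) ^ (2*s) * ‖z‖ ^ 2) := by
  have hpos : (0:ℝ) < 1 + inorm J := by have := inorm_nonneg' J; linarith
  unfold wgt
  rw [mul_pow, ← ENNReal.ofReal_pow (Real.rpow_nonneg hpos.le s),
    ← ENNReal.ofReal_pow (norm_nonneg _),
    ← ENNReal.ofReal_mul (by positivity)]
  congr 2
  rw [← Real.rpow_natCast ((1 + inorm J)^s) 2, ← Real.rpow_mul hpos.le]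
  norm_num [mul_comm]

lemma conjIdx_invol {d : ℕ} : Function.Involutive (conjIdx (d := d)) := by
  intro J
  simp [conjIdx]

lemma abs_field {d r : ℕ} (P : Poly d r) (u : Seq d) (J : Idx d) :
    ‖P.field u J‖ = ‖P.pderiv (conjIdx J) u‖ := by
  unfold Poly.field
  rw [norm_mul, norm_mul, Complex.norm_I]
  have : ‖sgnC J.2‖ = 1 := by
    cases J.2 <;> simp [sgnC]
  rw [this]
  ring

/-- Lemma "Estimates on the vector field".
Fix `r ≥ 3` and `R > 0`. For any `s > s₀ > d/2` there is `C > 0` such that for every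
`P ∈ 𝒫_r` and every `u` with `‖u‖_s < R` one has `‖X_P(u)‖_s ≤ C ‖P‖_R / R`. -/
theorem stmt_2 (d : ℕ) (hd : 1 ≤ d) (r : ℕ) (hr : 3 ≤ r) (R : ℝ) (hR : 0 < R)
    (s s₀ : ℝ) (hs₀ : (d : ℝ) / 2 < s₀) (hs : s₀ < s) :
    ∃ C : ℝ, 0 < C ∧ ∀ P : Poly d r, ∀ u : Seq d, MemSob d s u → sobNorm d s u < R →
      MemSob d s (P.field u) ∧ sobNorm d s (P.field u) ≤ C * (P.norm R) / R := by
  classical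
  have hdR : (0:ℝ) < (d:ℝ) := by exact_mod_cast hd
  have hs0 : (0:ℝ) < s := lt_trans (lt_trans (by positivity) hs₀) hs
  have h2s : (d:ℝ) < 2 * s := by linarith
  have hr2 : 2 ≤ r := by omega
  -- κ : tail weight sum
  set κ : ℝ≥0∞ := ∑' J : Idx d, ENNReal.ofReal ((1 + inorm J) ^ (-(2*s))) with hκdef
  have hκtop : κ < ⊤ := tsum_weight_idx_lt_top hd h2s
  -- pairs
  set ps : Finset ((_ : Fin r) × Fin r) :=
    Finset.univ.sigma (fun l : Fin r => Finset.univ.erase l) with hpsdef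
  -- the uniform constant
  set E : ℝ≥0∞ := (ENNReal.ofReal ((r:ℝ)^s))^2 * (2 * ps.card) * ps.card * 4
      * ENNReal.ofReal (R^2) * ((κ * ENNReal.ofReal (R^2)) ^ (r-2)) with hEdef
  have hEtop : E < ⊤ := by
    rw [hEdef]
    refine ENNReal.mul_lt_top (ENNReal.mul_lt_top (ENNReal.mul_lt_top (ENNReal.mul_lt_top
      (ENNReal.mul_lt_top ?_ ?_) ?_) ?_) ?_) ?_
    · exact ENNReal.pow_lt_top ENNReal.ofReal_lt_top
    · exact ENNReal.mul_lt_top (by norm_num) (ENNReal.natCast_lt_top _)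
    · exact ENNReal.natCast_lt_top _
    · norm_num
    · exact ENNReal.ofReal_lt_top
    · exact ENNReal.pow_lt_top (ENNReal.mul_lt_top hκtop ENNReal.ofReal_lt_top)
  have hRr1 : (0:ℝ) < R^(r-1) := pow_pos hR _
  refine ⟨max 1 (Real.sqrt E.toReal / R^(r-1)),
    lt_of_lt_of_le one_pos (le_max_left _ _), ?_⟩
  intro P u hmem hnorm
  set Creal : ℝ := max 1 (Real.sqrt E.toReal / R^(r-1)) with hCdef
  -- coefficient bound
  set B : ℝ := ⨆ Jv : Fin r → Idx d, ‖P.coeff Jv‖ with hBdef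
  have hbdd : BddAbove (Set.range fun Jv : Fin r → Idx d => ‖P.coeff Jv‖) := by
    obtain ⟨M, hM⟩ := P.bdd
    exact ⟨M, by rintro x ⟨Jv, rfl⟩; exact hM Jv⟩
  have hB : ∀ Jv : Fin r → Idx d, ‖P.coeff Jv‖ ≤ B := fun Jv => le_ciSup hbdd Jv
  have hB0 : 0 ≤ B := le_trans (norm_nonneg _) (hB (fun _ => (0, true)))
  have hnn : ∀ (J : Idx d) (z : ℂ), 0 ≤ (1 + inorm J)^(2*s) * ‖z‖ ^ 2 :=
    fun J z => mul_nonneg (Real.rpow_nonneg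
      (by have := inorm_nonneg' J; linarith) _) (sq_nonneg _)
  set N2 : ℝ≥0∞ := ∑' J : Idx d, (WE d s u J)^2 with hN2def
  set L1 : ℝ≥0∞ := ∑' J : Idx d, aE d u J with hL1def
  have hwgt_pos : ∀ J : Idx d, (0:ℝ) < 1 + inorm J := fun J => by
    have := inorm_nonneg' J; linarith
  -- N2 ≤ R²
  have hWE2 : ∀ J : Idx d, (WE d s u J)^2
      = ENNReal.ofReal ((1 + inorm J) ^ (2*s) * ‖u J‖ ^ 2) := fun J =>
    sq_weight_ofReal s J (u J)
  have hN2R : N2 ≤ ENNReal.ofReal (R^2) := by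
    have h2 : 0 ≤ sobNormSq d s u := tsum_nonneg fun J => hnn J (u J)
    have hsq : sobNormSq d s u ≤ R^2 := by
      have h1 : Real.sqrt (sobNormSq d s u) < R := hnorm
      nlinarith [Real.sq_sqrt h2, Real.sqrt_nonneg (sobNormSq d s u)]
    calc N2 = ENNReal.ofReal (sobNormSq d s u) := by
          rw [hN2def, tsum_congr hWE2,
            ← ENNReal.ofReal_tsum_of_nonneg (fun J => hnn J (u J)) hmem]
          rfl
      _ ≤ ENNReal.ofReal (R^2) := ENNReal.ofReal_le_ofReal hsq
  -- ℓ¹ bound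
  have hwgt_ne0 : ∀ J : Idx d, wgt d s J ≠ 0 := fun J => by
    unfold wgt
    simp only [ne_eq, ENNReal.ofReal_eq_zero, not_le]
    exact Real.rpow_pos_of_pos (hwgt_pos J) s
  have hwgt_netop : ∀ J : Idx d, wgt d s J ≠ ⊤ := fun J => ENNReal.ofReal_ne_top
  have hL1sq : L1^2 ≤ κ * N2 := by
    have haE : ∀ J : Idx d, aE d u J = (wgt d s J)⁻¹ * WE d s u J := fun J => by
      unfold WE
      rw [← mul_assoc, ENNReal.inv_mul_cancel (hwgt_ne0 J) (hwgt_netop J), one_mul]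
    have hinv2 : ∀ J : Idx d, ((wgt d s J)⁻¹)^2
        = ENNReal.ofReal ((1 + inorm J) ^ (-(2*s))) := fun J => by
      unfold wgt
      rw [← ENNReal.ofReal_rpow_of_pos (hwgt_pos J), ← ENNReal.ofReal_rpow_of_pos (hwgt_pos J),
        ← ENNReal.rpow_neg, ← ENNReal.rpow_natCast (ENNReal.ofReal (1 + inorm J) ^ (-s)) 2,
        ← ENNReal.rpow_mul]
      congr 1
      push_cast
      ring
    calc L1^2 = (∑' J : Idx d, (wgt d s J)⁻¹ * WE d s u J)^2 := by
          rw [hL1def, tsum_congr haE]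
      _ ≤ (∑' J : Idx d, ((wgt d s J)⁻¹)^2) * (∑' J : Idx d, (WE d s u J)^2) :=
          tsum_mul_le_sq _ _
      _ = κ * N2 := by rw [tsum_congr hinv2]
  -- the sum S
  set S : ℝ≥0∞ := ∑' J : Idx d,
      (wgt d s J * ENNReal.ofReal (‖P.field u J‖))^2 with hSdef
  have hSeq : S = ∑' K : Idx d,
      (wgt d s K * ENNReal.ofReal (‖P.pderiv K u‖))^2 := by
    rw [hSdef]
    have h1 : ∀ J : Idx d,
        (wgt d s J * ENNReal.ofReal (‖P.field u J‖))^2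
          = (wgt d s (conjIdx J) * ENNReal.ofReal (‖P.pderiv (conjIdx J) u‖))^2 := by
      intro J
      rw [abs_field]
      rfl
    rw [tsum_congr h1]
    exact (conjIdx_invol.toPerm).tsum_eq
      (f := fun K => (wgt d s K * ENNReal.ofReal (‖P.pderiv K u‖))^2)
  -- main estimate
  have hps : ∀ p : (_ : Fin r) × Fin r, p ∈ ps → p.2 ≠ p.1 := by
    intro p hp
    rw [hpsdef, Finset.mem_sigma] at hp
    exact Finset.ne_of_mem_erase hp.2
  have hmain : S ≤ (ENNReal.ofReal B)^2 * E := by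
    have hperK : ∀ K : Idx d,
        (wgt d s K * ENNReal.ofReal (‖P.pderiv K u‖))^2
          ≤ (ENNReal.ofReal B * ENNReal.ofReal ((r:ℝ)^s))^2 * ((2 * ps.card)
            * ∑ p ∈ ps, (Gfun d r s u p.1 p.2 K)^2) := by
      intro K
      have h1 := pderiv_weighted_bound hr2 hs0.le P u hB K
      have h2 : ∑ l : Fin r, ∑ m ∈ Finset.univ.erase l, Gfun d r s u l m K
          = ∑ p ∈ ps, Gfun d r s u p.1 p.2 K := by
        rw [hpsdef]
        exact Finset.sum_sigma' Finset.univ (fun l => Finset.univ.erase l)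
          (fun l m => Gfun d r s u l m K)
      rw [h2] at h1
      calc (wgt d s K * ENNReal.ofReal (‖P.pderiv K u‖))^2
          ≤ ((ENNReal.ofReal B * ENNReal.ofReal ((r:ℝ)^s))
              * ∑ p ∈ ps, Gfun d r s u p.1 p.2 K)^2 := pow_le_pow_left' h1 2
        _ = (ENNReal.ofReal B * ENNReal.ofReal ((r:ℝ)^s))^2
              * (∑ p ∈ ps, Gfun d r s u p.1 p.2 K)^2 := mul_pow _ _ 2
        _ ≤ (ENNReal.ofReal B * ENNReal.ofReal ((r:ℝ)^s))^2 * ((2 * ps.card)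
              * ∑ p ∈ ps, (Gfun d r s u p.1 p.2 K)^2) :=
            mul_le_mul_right (sq_sum_le ps _) _
    calc S ≤ ∑' K : Idx d, (ENNReal.ofReal B * ENNReal.ofReal ((r:ℝ)^s))^2
          * ((2 * ps.card) * ∑ p ∈ ps, (Gfun d r s u p.1 p.2 K)^2) := by
          rw [hSeq]
          exact ENNReal.tsum_le_tsum hperK
      _ = (ENNReal.ofReal B * ENNReal.ofReal ((r:ℝ)^s))^2 * ((2 * ps.card)
          * ∑ p ∈ ps, ∑' K : Idx d, (Gfun d r s u p.1 p.2 K)^2) := by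
          rw [ENNReal.tsum_mul_left]
          congr 1
          rw [ENNReal.tsum_mul_left]
          congr 1
          exact Summable.tsum_finsetSum fun p _ => ENNReal.summable
      _ ≤ (ENNReal.ofReal B * ENNReal.ofReal ((r:ℝ)^s))^2 * ((2 * ps.card)
          * ∑ _p ∈ ps, (4 * N2 * (L1 ^ (r-2))^2)) := by
          refine mul_le_mul_right (mul_le_mul_right (Finset.sum_le_sum fun p hp => ?_) _) _
          exact core_bound s u p.1 p.2 (hps p hp)
      _ = (ENNReal.ofReal B)^2 * ((ENNReal.ofReal ((r:ℝ)^s))^2 * (2 * ps.card) * ps.card * 4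
          * N2 * (L1^2) ^ (r-2)) := by
          rw [Finset.sum_const, nsmul_eq_mul]
          rw [mul_pow]
          rw [← pow_mul, ← pow_mul']
          ring
      _ ≤ (ENNReal.ofReal B)^2 * ((ENNReal.ofReal ((r:ℝ)^s))^2 * (2 * ps.card) * ps.card * 4
          * ENNReal.ofReal (R^2) * (κ * ENNReal.ofReal (R^2)) ^ (r-2)) := by
          refine mul_le_mul_right ?_ _
          refine mul_le_mul' (mul_le_mul_right hN2R _) (pow_le_pow_left' ?_ _)
          exact le_trans hL1sq (mul_le_mul_right hN2R κ)
      _ = (ENNReal.ofReal B)^2 * E := by rw [hEdef]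
  have hStop : S < ⊤ :=
    lt_of_le_of_lt hmain (ENNReal.mul_lt_top (ENNReal.pow_lt_top ENNReal.ofReal_lt_top) hEtop)
  -- summand identification
  have hsummand : ∀ J : Idx d,
      (wgt d s J * ENNReal.ofReal (‖P.field u J‖))^2
        = ENNReal.ofReal ((1 + inorm J) ^ (2*s) * ‖P.field u J‖ ^ 2) := fun J =>
    sq_weight_ofReal s J (P.field u J)
  have hMem : MemSob d s (P.field u) := by
    have h1 := ENNReal.summable_toReal hStop.ne
    refine h1.congr fun J => ?_
    rw [hsummand J, ENNReal.toReal_ofReal (hnn J (P.field u J))]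
  refine ⟨hMem, ?_⟩
  -- norm computation
  have hSreal : sobNormSq d s (P.field u) = S.toReal := by
    rw [hSdef, tsum_congr hsummand, ENNReal.tsum_toReal_eq (fun J => ENNReal.ofReal_ne_top)]
    refine tsum_congr fun J => ?_
    rw [ENNReal.toReal_ofReal (hnn J (P.field u J))]
  have hval : sobNorm d s (P.field u) ≤ B * Real.sqrt E.toReal := by
    unfold sobNorm
    rw [hSreal]
    have h1 : S.toReal ≤ ((ENNReal.ofReal B)^2 * E).toReal :=
      ENNReal.toReal_mono (ENNReal.mul_lt_top
        (ENNReal.pow_lt_top ENNReal.ofReal_lt_top) hEtop).ne hmain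
    have h2 : ((ENNReal.ofReal B)^2 * E).toReal = B^2 * E.toReal := by
      rw [ENNReal.toReal_mul, ENNReal.toReal_pow, ENNReal.toReal_ofReal hB0]
    calc Real.sqrt S.toReal ≤ Real.sqrt (B^2 * E.toReal) := by
          rw [← h2]
          exact Real.sqrt_le_sqrt h1
      _ = B * Real.sqrt E.toReal := by
          rw [Real.sqrt_mul (sq_nonneg B), Real.sqrt_sq hB0]
  -- final arithmetic
  have hnormP : P.norm R = B * R^r := rfl
  have hsqE : Real.sqrt E.toReal ≤ Creal * R^(r-1) := by
    have := le_max_right 1 (Real.sqrt E.toReal / R^(r-1))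
    calc Real.sqrt E.toReal = (Real.sqrt E.toReal / R^(r-1)) * R^(r-1) := by
          field_simp
      _ ≤ Creal * R^(r-1) := mul_le_mul_of_nonneg_right this hRr1.le
  have hRpow : R^r = R^(r-1) * R := by
    rw [← pow_succ]
    congr 1
    omega
  calc sobNorm d s (P.field u) ≤ B * Real.sqrt E.toReal := hval
    _ ≤ B * (Creal * R^(r-1)) := mul_le_mul_of_nonneg_left hsqE hB0
    _ = Creal * (B * R^r) / R := by
        rw [hRpow]
        field_simp
    _ = Creal * (P.norm R) / R := by rw [hnormP]

end AG
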